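/- Let n ∈ ℕ and π ∈ S_n with exactly l fixed points. Define tuples α, β ∈ (S_n)^n by α_0 = π, α_i = c^i for 1 ≤ i ≤ n-1, and β_j = c^j for 0 ≤ j ≤ n-1, where c is the cyclic shift c(i) = i+1 mod n. Then N(α,β) := |{(α_i(j), β_j(i)) : 0 ≤ i,j ≤ n-1}| = 2n - l. -/

import Mathlib

open Matrix Kronecker
open Fin.NatCast Fin.CommRing

/-- The realignment (reshuffling) of a bipartite operator. -/
def realign {n m : ℕ} (X : Matrix (Fin n × Fin m) (Fin n × Fin m) ℂ) :
    Matrix (Fin n × Fin n) (Fin m × Fin m) ℂ :=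
  Matrix.of fun p q => X (p.1, q.1) (p.2, q.2)

/-- The operator Schmidt rank of a bipartite operator, i.e. the rank
of its realignment. -/
noncomputable def osr {n m : ℕ} (X : Matrix (Fin n × Fin m) (Fin n × Fin m) ℂ) : ℕ :=
  (realign X).rank

/-- The bipartite unitary associated to two tuples of permutations:
`U_{α,β} = Σ_{i,j} e_i e_j^* ⊗ e_{α_i(j)} e_{β_j(i)}^*`. -/
def permU {n : ℕ} (α β : Fin n → Equiv.Perm (Fin n)) :
    Matrix (Fin n × Fin n) (Fin n × Fin n) ℂ :=
  Matrix.of fun p q => if p.2 = α p.1 q.1 ∧ q.2 = β q.1 p.1 then 1 else 0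

/-- `N(α,β) = |{(α_i(j), β_j(i)) : 0 ≤ i,j ≤ n-1}|`. -/
def Npairs {n : ℕ} (α β : Fin n → Equiv.Perm (Fin n)) : ℕ :=
  (Finset.image (fun ij : Fin n × Fin n => ((α ij.1) ij.2, (β ij.2) ij.1))
    Finset.univ).card

lemma rot_pow {n : ℕ} (m : ℕ) (j : Fin (n+1)) :
    ((finRotate (n+1)) ^ m) j = j + (m : Fin (n+1)) := by
  induction m with
  | zero => simp
  | succ k ih =>
    rw [pow_succ', Equiv.Perm.mul_apply, ih, finRotate_succ_apply]
    push_cast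
    ring


/-- With `α_0 = π`, `α_i = c^i` for `i ≠ 0`, and `β_j = c^j` (where `c` is the
cyclic shift by one and `π` has exactly `l` fixed points), `N(α,β) = 2n - l`. -/
theorem stmt6 {n : ℕ} (π : Equiv.Perm (Fin n)) (l : ℕ)
    (hl : (Finset.univ.filter fun i : Fin n => π i = i).card = l) :
    Npairs (fun i : Fin n => if i.val = 0 then π else (finRotate n) ^ i.val)
           (fun j : Fin n => (finRotate n) ^ j.val) = 2 * n - l := by
  obtain _ | N := n
  · simp only [Npairs, Finset.univ_eq_empty, Finset.image_empty, Finset.card_empty,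
      Finset.filter_empty] at *
    omega
  set f : Fin (N+1) × Fin (N+1) → Fin (N+1) × Fin (N+1) :=
    fun ij => (((fun i : Fin (N+1) => if i.val = 0 then π else (finRotate (N+1)) ^ i.val) ij.1) ij.2,
      ((fun j : Fin (N+1) => (finRotate (N+1)) ^ j.val) ij.2) ij.1) with hf
  set D : Finset (Fin (N+1) × Fin (N+1)) :=
    Finset.image (fun k : Fin (N+1) => (k, k)) Finset.univ with hD
  set G : Finset (Fin (N+1) × Fin (N+1)) :=
    Finset.image (fun j : Fin (N+1) => (π j, j)) Finset.univ with hG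
  have hf0 : ∀ j : Fin (N+1), f (0, j) = (π j, j) := by
    intro j
    simp only [hf]
    simp [rot_pow, Fin.cast_val_eq_self]
  have hfi : ∀ (i j : Fin (N+1)), i.val ≠ 0 → f (i, j) = (i + j, i + j) := by
    intro i j hi
    simp only [hf, if_neg hi]
    simp [rot_pow, Fin.cast_val_eq_self]
    exact add_comm j i
  have hS : Finset.image f Finset.univ = D ∪ G := by
    apply Finset.Subset.antisymm
    · intro p hp
      simp only [Finset.mem_image, Finset.mem_univ, true_and] at hp
      obtain ⟨⟨i, j⟩, rfl⟩ := hp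
      by_cases hi : i.val = 0
      · have : i = 0 := Fin.ext hi
        subst this
        rw [hf0 j]
        exact Finset.mem_union_right _ (Finset.mem_image_of_mem _ (Finset.mem_univ j))
      · rw [hfi i j hi]
        exact Finset.mem_union_left _ (Finset.mem_image_of_mem _ (Finset.mem_univ _))
    · intro p hp
      rw [Finset.mem_union] at hp
      rcases hp with hp | hp
      · simp only [hD, Finset.mem_image, Finset.mem_univ, true_and] at hp
        obtain ⟨k, rfl⟩ := hp
        obtain _ | M := N
        · haveI : Subsingleton (Fin (0+1)) := Fin.subsingleton_one
          have hπ : π k = k := Subsingleton.elim _ _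
          rw [Finset.mem_image]
          exact ⟨(0, k), Finset.mem_univ _, by rw [hf0 k, hπ]⟩
        · rw [Finset.mem_image]
          refine ⟨(1, k - 1), Finset.mem_univ _, ?_⟩
          have h1 : (1 : Fin (M + 1 + 1)).val ≠ 0 := by
            simp [Fin.val_one]
          rw [hfi 1 (k - 1) h1]
          congr 1 <;> ring
      · simp only [hG, Finset.mem_image, Finset.mem_univ, true_and] at hp
        obtain ⟨j, rfl⟩ := hp
        rw [Finset.mem_image]
        exact ⟨(0, j), Finset.mem_univ _, hf0 j⟩
  have hDcard : D.card = N + 1 := by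
    rw [hD, Finset.card_image_of_injective _ (fun a b h => (Prod.mk.injEq _ _ _ _ ▸ h).1),
      Finset.card_univ, Fintype.card_fin]
  have hGcard : G.card = N + 1 := by
    rw [hG, Finset.card_image_of_injective _ (fun a b h => (Prod.mk.injEq _ _ _ _ ▸ h).2),
      Finset.card_univ, Fintype.card_fin]
  have hDG : D ∩ G = Finset.image (fun j : Fin (N+1) => (π j, j))
      (Finset.univ.filter fun j => π j = j) := by
    ext p
    simp only [hD, hG, Finset.mem_inter, Finset.mem_image, Finset.mem_univ, true_and,
      Finset.mem_filter]
    constructor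
    · rintro ⟨⟨k, hk⟩, j, hj⟩
      refine ⟨j, ?_, hj⟩
      have h1 : π j = p.1 := congrArg Prod.fst hj
      have h2 : j = p.2 := congrArg Prod.snd hj
      have h3 : k = p.1 := congrArg Prod.fst hk
      have h4 : k = p.2 := congrArg Prod.snd hk
      rw [h1, h2, ← h3, ← h4]
    · rintro ⟨j, hfix, hj⟩
      refine ⟨⟨p.2, ?_⟩, j, hj⟩
      rw [← hj, hfix]
  have hDGcard : (D ∩ G).card = l := by
    rw [hDG, Finset.card_image_of_injective _ (fun a b h => (Prod.mk.injEq _ _ _ _ ▸ h).2), hl]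
  have hln : l ≤ N + 1 := by
    rw [← hl]
    exact (Finset.card_filter_le _ _).trans (by simp)
  have := Finset.card_union_add_card_inter D G
  rw [Npairs, show (fun ij : Fin (N+1) × Fin (N+1) =>
    (((if ij.1.val = 0 then π else (finRotate (N+1)) ^ ij.1.val)) ij.2,
      ((finRotate (N+1)) ^ ij.2.val) ij.1)) = f from rfl, hS]
  omega
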